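/- In the exterior algebra over ℝ of the vector space ℝⁿ × ℝⁿ, let ξᵢ = ι(eᵢ, 0) and ξ′ᵢ = ι(0, eᵢ) for i = 1,…,n, where e₁,…,eₙ is the standard basis of ℝⁿ. For L ⊆ {1,…,n} write ξ^L (resp. ξ′^L) for the product of the ξᵢ (resp. ξ′ᵢ), i ∈ L, in increasing order of indices. Then for every natural number p with 0 ≤ p ≤ n: (Σᵢ₌₁ⁿ ξᵢ ξ′ᵢ)^p = p! · (−1)^{p(p−1)/2} · Σ_{L ⊆ {1,…,n}, |L| = p} ξ^L ξ′^L. -/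
import Mathlib

variable {n : ℕ}

/-- `ξᵢ = ι(eᵢ, 0)` in the exterior algebra of `ℝⁿ × ℝⁿ`. -/
noncomputable def ξ (i : Fin n) : ExteriorAlgebra ℝ ((Fin n → ℝ) × (Fin n → ℝ)) :=
  ExteriorAlgebra.ι ℝ (Pi.single i (1 : ℝ), 0)

/-- `ξ′ᵢ = ι(0, eᵢ)` in the exterior algebra of `ℝⁿ × ℝⁿ`. -/
noncomputable def ξ' (i : Fin n) : ExteriorAlgebra ℝ ((Fin n → ℝ) × (Fin n → ℝ)) :=
  ExteriorAlgebra.ι ℝ ((0 : Fin n → ℝ), Pi.single i (1 : ℝ))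

/-- `ξ^L`: product of the `ξᵢ`, `i ∈ L`, in increasing order of indices. -/
noncomputable def ξpow (L : Finset (Fin n)) : ExteriorAlgebra ℝ ((Fin n → ℝ) × (Fin n → ℝ)) :=
  ((L.sort (· ≤ ·)).map ξ).prod

/-- `ξ′^L`: product of the `ξ′ᵢ`, `i ∈ L`, in increasing order of indices. -/
noncomputable def ξ'pow (L : Finset (Fin n)) : ExteriorAlgebra ℝ ((Fin n → ℝ) × (Fin n → ℝ)) :=
  ((L.sort (· ≤ ·)).map ξ').prod

namespace XiAux

lemma swap (x y : (Fin n → ℝ) × (Fin n → ℝ)) :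
    ExteriorAlgebra.ι ℝ x * ExteriorAlgebra.ι ℝ y =
    -(ExteriorAlgebra.ι ℝ y * ExteriorAlgebra.ι ℝ x) :=
  eq_neg_of_add_eq_zero_left (ExteriorAlgebra.ι_add_mul_swap x y)

lemma xi_swap (i j : Fin n) : ξ i * ξ j = -(ξ j * ξ i) := swap _ _
lemma xi'_swap (i j : Fin n) : ξ' i * ξ' j = -(ξ' j * ξ' i) := swap _ _
lemma xi_xi'_swap (i j : Fin n) : ξ i * ξ' j = -(ξ' j * ξ i) := swap _ _
lemma xi'_xi_swap (i j : Fin n) : ξ' i * ξ j = -(ξ j * ξ' i) := swap _ _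

noncomputable def η (i : Fin n) : ExteriorAlgebra ℝ ((Fin n → ℝ) × (Fin n → ℝ)) := ξ i * ξ' i

lemma eta_sq (i : Fin n) : η i * η i = 0 := by
  unfold η
  calc ξ i * ξ' i * (ξ i * ξ' i) = ξ i * (ξ' i * ξ i) * ξ' i := by noncomm_ring
    _ = 0 := by
        rw [xi'_xi_swap]
        have h : ξ i * ξ i = 0 := ExteriorAlgebra.ι_sq_zero _
        calc ξ i * -(ξ i * ξ' i) * ξ' i = -((ξ i * ξ i) * (ξ' i * ξ' i)) := by noncomm_ring
          _ = 0 := by rw [h]; noncomm_ring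

lemma eta_comm (i j : Fin n) : Commute (η i) (η j) := by
  unfold Commute SemiconjBy η
  calc ξ i * ξ' i * (ξ j * ξ' j)
      = ξ i * (ξ' i * ξ j) * ξ' j := by noncomm_ring
    _ = -(ξ i * (ξ j * ξ' i) * ξ' j) := by rw [xi'_xi_swap]; noncomm_ring
    _ = -((ξ i * ξ j) * (ξ' i * ξ' j)) := by noncomm_ring
    _ = -(-(ξ j * ξ i) * (ξ' i * ξ' j)) := by rw [xi_swap]
    _ = (ξ j * ξ i) * (ξ' i * ξ' j) := by noncomm_ring
    _ = ξ j * (ξ i * ξ' i * ξ' j) := by noncomm_ring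
    _ = ξ j * -(ξ' i * (ξ i * ξ' j)) := by rw [xi_xi'_swap i i]; noncomm_ring
    _ = ξ j * -(ξ' i * -(ξ' j * ξ i)) := by rw [xi_xi'_swap i j]
    _ = ξ j * ((ξ' i * ξ' j) * ξ i) := by noncomm_ring
    _ = ξ j * ((-(ξ' j * ξ' i)) * ξ i) := by rw [xi'_swap i j]
    _ = -(ξ j * ξ' j * (ξ' i * ξ i)) := by noncomm_ring
    _ = -(ξ j * ξ' j * -(ξ i * ξ' i)) := by rw [xi'_xi_swap]
    _ = ξ j * ξ' j * (ξ i * ξ' i) := by noncomm_ring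

lemma xi'_mul_list (j : Fin n) (l : List (Fin n)) :
    ξ' j * (l.map ξ).prod = ((-1 : ℤ) ^ l.length) • ((l.map ξ).prod * ξ' j) := by
  induction l with
  | nil => simp
  | cons a l ih =>
    simp only [List.map_cons, List.prod_cons, List.length_cons]
    calc ξ' j * (ξ a * (l.map ξ).prod) = (ξ' j * ξ a) * (l.map ξ).prod := by noncomm_ring
      _ = -(ξ a * ξ' j) * (l.map ξ).prod := by rw [xi'_xi_swap]
      _ = -(ξ a * (ξ' j * (l.map ξ).prod)) := by noncomm_ring
      _ = -(ξ a * (((-1:ℤ)^l.length) • ((l.map ξ).prod * ξ' j))) := by rw [ih]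
      _ = ((-1:ℤ)^(l.length+1)) • (ξ a * (l.map ξ).prod * ξ' j) := by
          rw [mul_smul_comm, pow_succ, mul_smul, mul_assoc]
          simp

lemma eta_list (l : List (Fin n)) :
    (l.map η).prod = ((-1:ℤ)^(l.length.choose 2)) • ((l.map ξ).prod * (l.map ξ').prod) := by
  induction l with
  | nil => simp
  | cons a l ih =>
    simp only [List.map_cons, List.prod_cons, List.length_cons]
    rw [ih]
    have hc : (l.length + 1).choose 2 = l.length.choose 2 + l.length := by
      rw [Nat.choose_succ_succ, Nat.choose_one_right, Nat.add_comm]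
    rw [hc]
    calc η a * (((-1:ℤ)^(l.length.choose 2)) • ((l.map ξ).prod * (l.map ξ').prod))
        = ((-1:ℤ)^(l.length.choose 2)) • (ξ a * (ξ' a * (l.map ξ).prod) * (l.map ξ').prod) := by
          rw [mul_smul_comm]; unfold η; noncomm_ring
      _ = ((-1:ℤ)^(l.length.choose 2)) •
            (ξ a * (((-1:ℤ)^l.length) • ((l.map ξ).prod * ξ' a)) * (l.map ξ').prod) := by
          rw [xi'_mul_list]
      _ = ((-1:ℤ)^(l.length.choose 2 + l.length)) •
            (ξ a * (l.map ξ).prod * (ξ' a * (l.map ξ').prod)) := by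
          rw [mul_smul_comm, smul_mul_assoc, smul_smul, ← pow_add]
          noncomm_ring

noncomputable def ηpow (L : Finset (Fin n)) : ExteriorAlgebra ℝ ((Fin n → ℝ) × (Fin n → ℝ)) :=
  ((L.sort (· ≤ ·)).map η).prod

lemma pairwise_comm (l : List (Fin n)) : List.Pairwise Commute (l.map η) :=
  List.pairwise_map.mpr (List.pairwise_iff_forall_sublist.mpr fun _ => eta_comm _ _)

lemma eta_mul_etapow_notMem {j : Fin n} {L : Finset (Fin n)} (h : j ∉ L) :
    η j * ηpow L = ηpow (insert j L) := by
  have hperm : (j :: L.sort (· ≤ ·)).Perm ((insert j L).sort (· ≤ ·)) := by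
    rw [← Multiset.coe_eq_coe]
    show (j ::ₘ ↑(L.sort (· ≤ ·)) : Multiset (Fin n)) = _
    rw [Finset.sort_eq, Finset.sort_eq, Finset.insert_val_of_notMem h]
  have := (hperm.map η).prod_eq' (pairwise_comm (j :: L.sort (· ≤ ·)))
  simpa [ηpow] using this

lemma eta_mul_etapow_mem {j : Fin n} {L : Finset (Fin n)} (h : j ∈ L) :
    η j * ηpow L = 0 := by
  have h2 : ηpow L = η j * ηpow (L.erase j) := by
    rw [eta_mul_etapow_notMem (Finset.notMem_erase j L), Finset.insert_erase h]
  rw [h2, ← mul_assoc, eta_sq, zero_mul]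

lemma sum_eta_pow (p : ℕ) :
    (∑ i : Fin n, η i) ^ p =
      p.factorial • ∑ L ∈ Finset.powersetCard p (Finset.univ : Finset (Fin n)), ηpow L := by
  induction p with
  | zero => simp [ηpow]
  | succ p ih =>
    rw [pow_succ', ih, mul_smul_comm, Finset.mul_sum]
    have step : ∀ L ∈ Finset.powersetCard p (Finset.univ : Finset (Fin n)),
        (∑ i : Fin n, η i) * ηpow L = ∑ i ∈ Lᶜ, ηpow (insert i L) := by
      intro L _
      rw [Finset.sum_mul]
      rw [← Finset.sum_add_sum_compl L (fun i => η i * ηpow L)]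
      have h1 : ∑ i ∈ L, η i * ηpow L = 0 :=
        Finset.sum_eq_zero fun i hi => eta_mul_etapow_mem hi
      rw [h1, zero_add]
      exact Finset.sum_congr rfl fun i hi =>
        eta_mul_etapow_notMem (Finset.mem_compl.mp hi)
    rw [Finset.sum_congr rfl step]
    have key : ∑ L ∈ Finset.powersetCard p (Finset.univ : Finset (Fin n)),
        ∑ i ∈ Lᶜ, ηpow (insert i L)
        = ∑ M ∈ Finset.powersetCard (p+1) (Finset.univ : Finset (Fin n)), ∑ i ∈ M, ηpow M := by
      rw [Finset.sum_sigma' _ (fun L => Lᶜ) (fun L i => ηpow (insert i L)),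
          Finset.sum_sigma' _ (fun M => M) (fun M _ => ηpow M)]
      refine Finset.sum_nbij' (fun x => ⟨insert x.2 x.1, x.2⟩) (fun x => ⟨x.1.erase x.2, x.2⟩)
        ?_ ?_ ?_ ?_ ?_
      · rintro ⟨L, i⟩ hx
        simp only [Finset.mem_sigma, Finset.mem_powersetCard_univ, Finset.mem_compl] at hx ⊢
        exact ⟨by rw [Finset.card_insert_of_notMem hx.2, hx.1], Finset.mem_insert_self i L⟩
      · rintro ⟨M, i⟩ hx
        simp only [Finset.mem_sigma, Finset.mem_powersetCard_univ, Finset.mem_compl] at hx ⊢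
        exact ⟨by rw [Finset.card_erase_of_mem hx.2, hx.1]; rfl, Finset.notMem_erase i M⟩
      · rintro ⟨L, i⟩ hx
        simp only [Finset.mem_sigma, Finset.mem_powersetCard_univ, Finset.mem_compl] at hx
        simp [Finset.erase_insert hx.2]
      · rintro ⟨M, i⟩ hx
        simp only [Finset.mem_sigma, Finset.mem_powersetCard_univ, Finset.mem_compl] at hx
        simp [Finset.insert_erase hx.2]
      · rintro ⟨L, i⟩ _; rfl
    rw [key]
    have h2 : ∀ M ∈ Finset.powersetCard (p+1) (Finset.univ : Finset (Fin n)),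
        ∑ i ∈ M, ηpow M = (p+1) • ηpow M := by
      intro M hM
      rw [Finset.sum_const, Finset.mem_powersetCard_univ.mp hM]
    rw [Finset.sum_congr rfl h2, ← Finset.smul_sum, smul_smul, Nat.factorial_succ,
        Nat.mul_comm]

end XiAux

theorem pow_of_sum_xi_xi' (p : ℕ) (hp : p ≤ n) :
    (∑ i : Fin n, ξ i * ξ' i) ^ p =
      ((p.factorial : ℤ) * (-1) ^ (p * (p - 1) / 2)) •
        ∑ L ∈ Finset.powersetCard p (Finset.univ : Finset (Fin n)), ξpow L * ξ'pow L := by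
  have h1 : (∑ i : Fin n, ξ i * ξ' i) = ∑ i : Fin n, XiAux.η i := rfl
  rw [h1, XiAux.sum_eta_pow p]
  have h2 : ∀ L ∈ Finset.powersetCard p (Finset.univ : Finset (Fin n)),
      XiAux.ηpow L = ((-1:ℤ) ^ (p * (p-1) / 2)) • (ξpow L * ξ'pow L) := by
    intro L hL
    have hcard : (L.sort (· ≤ ·)).length = p := by
      rw [Finset.length_sort, Finset.mem_powersetCard_univ.mp hL]
    rw [XiAux.ηpow, XiAux.eta_list, hcard, Nat.choose_two_right]
    rfl
  rw [Finset.sum_congr rfl h2, ← Finset.smul_sum, ← natCast_zsmul, smul_smul]
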